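/- Let k > 0 and let μ ⊆ λ be partitions with |λ| − |μ| = k. Then λ/μ is a k-ribbon (its k squares lie on k consecutive diagonals D_d = {(i,j) : j − i = d}) if and only if there exist indices i₀, i₁ ∈ ℕ such that {[μ]_i : i ≠ i₀} = {[λ]_i : i ≠ i₁} as subsets of ℤ and [μ]_{i₀} + k = [λ]_{i₁}, where [ν]_i := ν_i − 1 − i. -/

import Mathlib

/-- A partition: a weakly decreasing, finitely supported sequence of naturals. -/
def IsPartition (f : ℕ → ℕ) : Prop :=
  (∀ i, f (i + 1) ≤ f i) ∧ ∃ N, ∀ i, N ≤ i → f i = 0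

/-- `α` is finitely supported with sum of parts equal to `d`. -/
def SumsTo (α : ℕ → ℕ) (d : ℕ) : Prop :=
  ∃ N, (∀ i, N ≤ i → α i = 0) ∧ ∑ i ∈ Finset.range N, α i = d

/-- The skew diagram `[λ/μ] = [λ] \ [μ]`. -/
def skewDiag (lam mu : ℕ → ℕ) : Set (ℕ × ℕ) :=
  {p | mu p.1 ≤ p.2 ∧ p.2 < lam p.1}

/-- `λ/μ` is a `k`-ribbon: it has `k` squares, and the diagonals `j - i = d`
meeting the skew diagram form a set of `k` consecutive integers. -/
def IsRibbon (k : ℕ) (lam mu : ℕ → ℕ) : Prop :=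
  SumsTo (fun i => lam i - mu i) k ∧
  ∃ d : ℤ, {z : ℤ | ∃ p ∈ skewDiag lam mu, (p.2 : ℤ) - p.1 = z} = Set.Ico d (d + k)

namespace RibbonAux

def bs (f : ℕ → ℕ) (i : ℕ) : ℤ := (f i : ℤ) - 1 - i

lemma bs_anti {f : ℕ → ℕ} (hf : ∀ i, f (i+1) ≤ f i) : StrictAnti (bs f) := by
  apply strictAnti_nat_of_succ_lt
  intro n
  have := hf n
  simp only [bs]
  push_cast
  omega

lemma part_anti {f : ℕ → ℕ} (hf : ∀ i, f (i+1) ≤ f i) : Antitone f :=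
  antitone_nat_of_succ_le hf

lemma strictAnti_range_eq {f g : ℕ → ℤ} (hf : StrictAnti f) (hg : StrictAnti g)
    (h : Set.range f = Set.range g) : ∀ n, f n = g n := by
  intro n
  induction n using Nat.strong_induction_on with
  | _ n ih =>
    obtain ⟨m, hm⟩ : f n ∈ Set.range g := h ▸ Set.mem_range_self n
    have h2 : f n ≤ g n := by
      rcases lt_or_ge m n with hc | hc
      · have e1 := ih m hc
        have e2 := hf hc
        omega
      · have := hg.antitone hc
        omega
    obtain ⟨m', hm'⟩ : g n ∈ Set.range f := h.symm ▸ Set.mem_range_self n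
    have h3 : g n ≤ f n := by
      rcases lt_or_ge m' n with hc | hc
      · have e1 := ih m' hc
        have e2 := hg hc
        omega
      · have := hf.antitone hc
        omega
    omega

def skip (a j : ℕ) : ℕ := if j < a then j else j + 1

lemma skip_strictMono (a : ℕ) : StrictMono (skip a) := by
  intro x y hxy
  simp only [skip]
  split <;> split <;> omega

lemma skip_ne (a j : ℕ) : skip a j ≠ a := by
  simp only [skip]; split <;> omega

lemma skip_surj {a i : ℕ} (hi : i ≠ a) : ∃ j, skip a j = i := by
  rcases lt_or_gt_of_ne hi with h | h
  · exact ⟨i, by simp [skip, h]⟩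
  · exact ⟨i - 1, by simp only [skip]; split <;> omega⟩

lemma range_bs_skip (f : ℕ → ℕ) (a : ℕ) :
    Set.range (fun j => bs f (skip a j)) = {z | ∃ i, i ≠ a ∧ z = bs f i} := by
  ext z
  constructor
  · rintro ⟨j, rfl⟩
    exact ⟨skip a j, skip_ne a j, rfl⟩
  · rintro ⟨i, hi, rfl⟩
    obtain ⟨j, hj⟩ := skip_surj hi
    exact ⟨j, by simp only []; rw [hj]⟩

lemma telescope (F G : ℕ → ℤ) (a b : ℕ) (hab : a ≤ b) :
    ∑ i ∈ Finset.Icc a b, (F i - G i) =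
      (F a - G b) + ∑ i ∈ Finset.Ico a b, (F (i+1) - G i) := by
  induction b, hab using Nat.le_induction with
  | base => simp
  | succ b hab ih =>
    rw [Finset.sum_Icc_succ_top (by omega), Finset.sum_Ico_succ_top hab]
    linarith

end RibbonAux

open RibbonAux

theorem ribbon_characterization (k : ℕ) (hk : 0 < k) (lam mu : ℕ → ℕ)
    (hl : IsPartition lam) (hm : IsPartition mu) (hsub : ∀ i, mu i ≤ lam i)
    (hsize : SumsTo (fun i => lam i - mu i) k) :
    IsRibbon k lam mu ↔
      ∃ i₀ i₁ : ℕ,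
        {z : ℤ | ∃ i : ℕ, i ≠ i₀ ∧ z = (mu i : ℤ) - 1 - i} =
          {z : ℤ | ∃ i : ℕ, i ≠ i₁ ∧ z = (lam i : ℤ) - 1 - i} ∧
        ((mu i₀ : ℤ) - 1 - i₀) + k = (lam i₁ : ℤ) - 1 - i₁ := by
  constructor
  · -- forward direction
    rintro ⟨-, d, hS⟩
    obtain ⟨N, hN, hsum⟩ := hsize
    set R : Finset ℕ := (Finset.range N).filter (fun i => mu i < lam i) with hR
    have hRmem : ∀ i, mu i < lam i ↔ i ∈ R := by
      intro i
      simp only [hR, Finset.mem_filter, Finset.mem_range]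
      constructor
      · intro h
        refine ⟨?_, h⟩
        by_contra hc
        push_neg at hc
        have := hN i hc
        simp only [] at this
        omega
      · tauto
    have hRne : R.Nonempty := by
      by_contra hc
      rw [Finset.not_nonempty_iff_eq_empty] at hc
      have hz : ∑ i ∈ Finset.range N, (lam i - mu i) = 0 := by
        apply Finset.sum_eq_zero
        intro i _
        have hni : ¬ (mu i < lam i) := by
          intro h
          have := (hRmem i).1 h
          rw [hc] at this
          exact absurd this (Finset.notMem_empty i)
        omega
      simp only [] at hsum
      omega
    set i1 := R.min' hRne with hi1def
    set i0 := R.max' hRne with hi0def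
    have hblock : ∀ i, mu i < lam i → i1 ≤ i ∧ i ≤ i0 := by
      intro i h
      have hiR := (hRmem i).1 h
      exact ⟨R.min'_le i hiR, R.le_max' i hiR⟩
    have hout : ∀ i, i < i1 ∨ i0 < i → lam i = mu i := by
      intro i hi
      by_contra hc
      have h := hblock i (by have := hsub i; omega)
      omega
    have hi1 : mu i1 < lam i1 := (hRmem i1).2 (R.min'_mem hRne)
    have hi0 : mu i0 < lam i0 := (hRmem i0).2 (R.max'_mem hRne)
    have h10 : i1 ≤ i0 := R.min'_le i0 (R.max'_mem hRne)
    have hSmem : ∀ i c : ℕ, mu i ≤ c → c < lam i →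
        d ≤ (c:ℤ) - i ∧ (c:ℤ) - i < d + k := by
      intro i c h1 h2
      have : ((c:ℤ) - i) ∈ Set.Ico d (d + (k:ℤ)) := by
        rw [← hS]
        exact ⟨(i, c), ⟨h1, h2⟩, rfl⟩
      exact ⟨this.1, this.2⟩
    have hSrev : ∀ z : ℤ, d ≤ z → z < d + k →
        ∃ i c : ℕ, mu i ≤ c ∧ c < lam i ∧ z = (c:ℤ) - i := by
      intro z h1 h2
      have : z ∈ Set.Ico d (d + (k:ℤ)) := ⟨h1, h2⟩
      rw [← hS] at this
      obtain ⟨⟨i, c⟩, ⟨ha, hb⟩, hzc⟩ := this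
      exact ⟨i, c, ha, hb, hzc.symm⟩
    -- Step A : bs lam i1 = d + k - 1
    have htop : bs lam i1 = d + (k:ℤ) - 1 := by
      have hA1 := hSmem i1 (lam i1 - 1) (by omega) (by omega)
      have hA2 := hSrev (d + k - 1) (by omega) (by omega)
      obtain ⟨i, c, hc1, hc2, hc3⟩ := hA2
      have hi1le : i1 ≤ i := (hblock i (by omega)).1
      have hanti := (bs_anti fun n => hl.1 n).antitone hi1le
      simp only [bs] at *
      omega
    -- Step B : bs mu i0 + 1 = d
    have hbot : bs mu i0 + 1 = d := by
      have hB1 := hSmem i0 (mu i0) le_rfl hi0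
      have hB2 := hSrev d le_rfl (by omega)
      obtain ⟨i, c, hc1, hc2, hc3⟩ := hB2
      have hile : i ≤ i0 := (hblock i (by omega)).2
      have hmono := part_anti (fun n => hm.1 n) hile
      simp only [bs] at *
      omega
    -- Step C : middle inequalities
    have hC : ∀ i, i1 ≤ i → i < i0 → bs mu i ≤ bs lam (i+1) := by
      intro i ha hb
      have hmono1 : mu i0 ≤ mu i := part_anti (fun n => hm.1 n) (le_of_lt hb)
      have hmono2 : bs mu i ≤ bs mu i1 := (bs_anti fun n => hm.1 n).antitone ha
      have hmem : d ≤ bs mu i ∧ bs mu i < d + k := by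
        simp only [bs] at hmono2 htop hbot ⊢
        omega
      obtain ⟨i', c, h1, h2, h3⟩ := hSrev (bs mu i) hmem.1 hmem.2
      have hi' : i + 1 ≤ i' := by
        by_contra hc'
        push_neg at hc'
        have hmono3 : mu i ≤ mu i' := part_anti (fun n => hm.1 n) (by omega)
        simp only [bs] at h3
        omega
      have hanti := (bs_anti fun n => hl.1 n).antitone hi'
      simp only [bs] at *
      omega
    -- counting
    have hi0N : i0 < N := by
      have : i0 ∈ R := R.max'_mem hRne
      simp only [hR, Finset.mem_filter, Finset.mem_range] at this
      exact this.1
    have hsum2 : ∑ i ∈ Finset.Icc i1 i0, ((lam i : ℤ) - mu i) = k := by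
      have e1 : ∑ i ∈ Finset.range N, ((lam i:ℤ) - mu i) = k := by
        have e0 : ∑ i ∈ Finset.range N, ((lam i:ℤ) - mu i)
            = ∑ i ∈ Finset.range N, ((lam i - mu i : ℕ) : ℤ) := by
          apply Finset.sum_congr rfl
          intro i _
          have := hsub i
          omega
        rw [e0, ← Nat.cast_sum]
        simp only [] at hsum
        rw [hsum]
      rw [← e1]
      apply Finset.sum_subset
      · intro i hi
        simp only [Finset.mem_Icc] at hi
        simp only [Finset.mem_range]
        omega
      · intro i _ hi2
        simp only [Finset.mem_Icc] at hi2
        have : lam i = mu i := hout i (by omega)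
        rw [this]
        ring
    have htel := telescope (bs lam) (bs mu) i1 i0 h10
    have hicc : ∑ i ∈ Finset.Icc i1 i0, (bs lam i - bs mu i) = k := by
      rw [← hsum2]
      apply Finset.sum_congr rfl
      intro i _
      simp only [bs]
      ring
    have hzero : ∑ i ∈ Finset.Ico i1 i0, (bs lam (i+1) - bs mu i) = 0 := by
      have hd : bs lam i1 - bs mu i0 = k := by omega
      linarith
    have hmid : ∀ i, i1 ≤ i → i < i0 → bs mu i = bs lam (i+1) := by
      have hnn : ∀ j ∈ Finset.Ico i1 i0, 0 ≤ bs lam (j+1) - bs mu j := by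
        intro j hj
        simp only [Finset.mem_Ico] at hj
        have := hC j hj.1 hj.2
        omega
      have heach := (Finset.sum_eq_zero_iff_of_nonneg hnn).mp hzero
      intro i ha hb
      have := heach i (Finset.mem_Ico.mpr ⟨ha, hb⟩)
      omega
    refine ⟨i0, i1, ?_, ?_⟩
    · ext z
      simp only [Set.mem_setOf_eq]
      constructor
      · rintro ⟨i, hne, rfl⟩
        rcases lt_or_ge i i1 with h | h
        · exact ⟨i, by omega, by rw [hout i (Or.inl h)]⟩
        · rcases lt_or_ge i0 i with h' | h'
          · exact ⟨i, by omega, by rw [hout i (Or.inr h')]⟩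
          · refine ⟨i + 1, by omega, ?_⟩
            have := hmid i h (by omega)
            simp only [bs] at this
            push_cast
            omega
      · rintro ⟨i, hne, rfl⟩
        rcases lt_or_ge i i1 with h | h
        · exact ⟨i, by omega, by rw [hout i (Or.inl h)]⟩
        · rcases lt_or_ge i0 i with h' | h'
          · exact ⟨i, by omega, by rw [hout i (Or.inr h')]⟩
          · obtain ⟨j, rfl⟩ : ∃ j, i = j + 1 := ⟨i - 1, by omega⟩
            refine ⟨j, by omega, ?_⟩
            have := hmid j (by omega) (by omega)
            simp only [bs] at this
            push_cast
            omega
    · show bs mu i0 + (k:ℤ) = bs lam i1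
      omega
  · -- backward direction
    rintro ⟨i0, i1, hsets, hbk⟩
    refine ⟨hsize, ?_⟩
    have hranges : Set.range (fun j => bs mu (skip i0 j))
        = Set.range (fun j => bs lam (skip i1 j)) := by
      rw [range_bs_skip, range_bs_skip]
      exact hsets
    have E := strictAnti_range_eq
      (fun _ _ h => bs_anti (fun n => hm.1 n) (skip_strictMono i0 h))
      (fun _ _ h => bs_anti (fun n => hl.1 n) (skip_strictMono i1 h)) hranges
    have hbk' : bs mu i0 + (k:ℤ) = bs lam i1 := hbk
    have h10 : i1 ≤ i0 := by
      by_contra hc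
      push_neg at hc
      have hEi := E i0
      simp only [skip, if_neg (lt_irrefl i0), if_pos hc] at hEi
      have h1 : bs mu (i0 + 1) < bs mu i0 := bs_anti (fun n => hm.1 n) (by omega)
      have h2 : bs mu i0 ≤ bs lam i0 := by
        have := hsub i0
        simp only [bs]
        omega
      omega
    have hlow : ∀ j, j < i1 → lam j = mu j := by
      intro j hj
      have hEj := E j
      simp only [skip, if_pos (show j < i0 by omega), if_pos hj, bs] at hEj
      omega
    have hhigh : ∀ j, i0 < j → lam j = mu j := by
      intro j hj
      obtain ⟨j', rfl⟩ : ∃ j', j = j' + 1 := ⟨j - 1, by omega⟩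
      have hEj := E j'
      simp only [skip, if_neg (show ¬ j' < i0 by omega),
        if_neg (show ¬ j' < i1 by omega), bs] at hEj
      omega
    have hmid : ∀ j, i1 ≤ j → j < i0 → bs mu j = bs lam (j+1) := by
      intro j h1 h2
      have hEj := E j
      simp only [skip, if_pos h2, if_neg (show ¬ j < i1 by omega)] at hEj
      exact hEj
    refine ⟨bs mu i0 + 1, ?_⟩
    ext z
    simp only [Set.mem_setOf_eq, Set.mem_Ico]
    constructor
    · rintro ⟨⟨i, c⟩, ⟨h1, h2⟩, rfl⟩
      dsimp only at h1 h2 ⊢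
      have hib : i1 ≤ i ∧ i ≤ i0 := by
        constructor
        · by_contra hc
          push_neg at hc
          have := hlow i hc
          omega
        · by_contra hc
          push_neg at hc
          have := hhigh i hc
          omega
      have hmu : mu i0 ≤ mu i := part_anti (fun n => hm.1 n) hib.2
      have hla : bs lam i ≤ bs lam i1 := (bs_anti fun n => hl.1 n).antitone hib.1
      simp only [bs] at hla hbk' ⊢
      constructor
      · omega
      · omega
    · rintro ⟨hz1, hz2⟩
      have hex : ∃ j, i1 ≤ j ∧ bs mu j < z := ⟨i0, h10, by omega⟩
      obtain ⟨j, hj1, hj2, hjmin⟩ : ∃ j, i1 ≤ j ∧ bs mu j < z ∧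
          ∀ j' < j, ¬(i1 ≤ j' ∧ bs mu j' < z) :=
        ⟨Nat.find hex, (Nat.find_spec hex).1, (Nat.find_spec hex).2,
          fun j' h => Nat.find_min hex h⟩
      have hjle : j ≤ i0 := by
        by_contra hc
        exact hjmin i0 (by omega) ⟨h10, by omega⟩
      have hup : z ≤ bs lam j := by
        rcases Nat.eq_or_lt_of_le hj1 with heq | hlt
        · rw [← heq]
          omega
        · obtain ⟨j', rfl⟩ : ∃ j', j = j' + 1 := ⟨j - 1, by omega⟩
          have hn := hjmin j' (Nat.lt_succ_self j')
          push_neg at hn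
          have hz3 := hn (by omega)
          have := hmid j' (by omega) (by omega)
          omega
      refine ⟨(j, (z + j).toNat), ⟨?_, ?_⟩, ?_⟩
      · dsimp only
        simp only [bs] at hj2
        omega
      · dsimp only
        simp only [bs] at hup hj2
        omega
      · dsimp only
        simp only [bs] at hj2
        omega
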